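/- Let m ≥ 1, t ∈ ℝ, ξ ∈ 𝕊^{2m+1}. For every z ∈ 𝕊^{2m+1} and every w ∈ ℂ^{m+1} with Re(Σ_j w_j conj(z_j)) = 0 (i.e. w tangent to the sphere at z), the derivative W = DΦ_{t,ξ}(z)[w] of Φ_{t,ξ} (extended by the same formula to a neighborhood of 𝕊^{2m+1}) satisfies Im(Σ_j conj(Φ_{t,ξ}(z)_j) · W_j) = |cosh t + sinh t (z·ξ̄)|^{−2} · Im(Σ_j conj(z_j) · w_j). In other words, Φ_{t,ξ} pulls back the canonical contact form θ_c of 𝕊^{2m+1} to |cosh t + sinh t (z·ξ̄)|^{−2} θ_c, i.e. Φ_{t,ξ} is a pseudoconformal diffeomorphism. -/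

import Mathlib

noncomputable section

/-- The hermitian pairing `z·ξ̄ = Σ_j z_j conj(ξ_j)` on `ℂ^{m+1}`
(note Mathlib's `inner` is conjugate-linear in the first slot). -/
def hprod {m : ℕ} (z ξ : EuclideanSpace ℂ (Fin (m+1))) : ℂ := inner ℂ ξ z

/-- The degree-zero homogeneous extension of a function on the unit sphere
`𝕊^{2m+1} ⊂ ℂ^{m+1}`: `F̃(y) = F(y/‖y‖)`. -/
def sphExtC {m : ℕ} (F : EuclideanSpace ℂ (Fin (m+1)) → ℝ)
    (y : EuclideanSpace ℂ (Fin (m+1))) : ℝ :=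
  F (‖y‖⁻¹ • y)

/-- Second directional derivative of `F` at `x` in direction `v`. -/
def dir2 {V : Type*} [NormedAddCommGroup V] [NormedSpace ℝ V]
    (F : V → ℝ) (x v : V) : ℝ :=
  fderiv ℝ (fun y => fderiv ℝ F y v) x v

/-- The Euclidean Laplacian on `ℂ^{m+1} ≅ ℝ^{2m+2}`, computed in the real orthonormal
basis `{e_j, i·e_j}`. -/
def lapC {m : ℕ} (F : EuclideanSpace ℂ (Fin (m+1)) → ℝ)
    (z : EuclideanSpace ℂ (Fin (m+1))) : ℝ :=
  ∑ j : Fin (m+1),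
    (dir2 F z (EuclideanSpace.single j 1) + dir2 F z (EuclideanSpace.single j Complex.I))

/-- The Reeb derivative `TF(z) = d/ds|_{s=0} F(e^{is/2} z)` for the canonical
pseudohermitian structure on `𝕊^{2m+1}`. -/
def reeb {m : ℕ} (F : EuclideanSpace ℂ (Fin (m+1)) → ℝ)
    (z : EuclideanSpace ℂ (Fin (m+1))) : ℝ :=
  deriv (fun s : ℝ => F (Complex.exp (Complex.I * s / 2) • z)) 0

/-- The CR sub-Laplacian of `(𝕊^{2m+1}, θ_c)`:
`Δ_b F(z) = (1/4) Δ_{ℝ^{2m+2}} F̃(z) − T(TF)(z)`. -/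
def subLapC {m : ℕ} (F : EuclideanSpace ℂ (Fin (m+1)) → ℝ)
    (z : EuclideanSpace ℂ (Fin (m+1))) : ℝ :=
  (1 / 4) * lapC (sphExtC F) z - reeb (reeb (sphExtC F)) z

/-- Orthogonal projection onto the holomorphic tangent (horizontal) space
`H_z = {w : Σ_j w_j conj(z_j) = 0}` at a point `z` of the unit sphere. -/
def projH {m : ℕ} (z w : EuclideanSpace ℂ (Fin (m+1))) : EuclideanSpace ℂ (Fin (m+1)) :=
  w - (inner ℂ z w : ℂ) • z

/-- `|∂F|²(z) = (1/8)|P_{H_z}(∇F̃(z))|²`, the squared norm of `∂_b F` with respect to the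
canonical pseudohermitian structure `θ_c`. -/
def delbSq {m : ℕ} (F : EuclideanSpace ℂ (Fin (m+1)) → ℝ)
    (z : EuclideanSpace ℂ (Fin (m+1))) : ℝ :=
  (1 / 8) * ‖projH z (gradient (sphExtC F) z)‖ ^ 2

/-- The pseudoconformal map `Φ_{t,ξ}` of the CR sphere `𝕊^{2m+1} ⊂ ℂ^{m+1}`. -/
def PhiC {m : ℕ} (t : ℝ) (ξ z : EuclideanSpace ℂ (Fin (m+1))) :
    EuclideanSpace ℂ (Fin (m+1)) :=
  ((Real.cosh t : ℂ) + (Real.sinh t : ℂ) * hprod z ξ)⁻¹ • (z - hprod z ξ • ξ) +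
    (((Real.sinh t : ℂ) + (Real.cosh t : ℂ) * hprod z ξ) /
      ((Real.cosh t : ℂ) + (Real.sinh t : ℂ) * hprod z ξ)) • ξ

set_option maxHeartbeats 1000000 in
open ContinuousLinearMap in
/-- for `m ≥ 1`, `t ∈ ℝ`, `ξ, z ∈ 𝕊^{2m+1}` and `w ∈ ℂ^{m+1}` tangent to the
sphere at `z` (i.e. `Re(Σ_j w_j conj(z_j)) = 0`), the derivative `W = DΦ_{t,ξ}(z)[w]` satisfies
`Im(Σ_j conj(Φ_{t,ξ}(z)_j) W_j) = |cosh t + sinh t (z·ξ̄)|⁻² Im(Σ_j conj(z_j) w_j)`: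
`Φ_{t,ξ}` pulls back `θ_c` to `|cosh t + sinh t (z·ξ̄)|⁻² θ_c`. -/
theorem stmt11 (m : ℕ) (hm : 1 ≤ m) (t : ℝ) (ξ z w : EuclideanSpace ℂ (Fin (m+1)))
    (hξ : ‖ξ‖ = 1) (hz : ‖z‖ = 1)
    (hw : (inner ℂ z w : ℂ).re = 0) :
    (inner ℂ (PhiC t ξ z) (fderiv ℝ (PhiC t ξ) z w) : ℂ).im
      = (‖(Real.cosh t : ℂ) + (Real.sinh t : ℂ) * hprod z ξ‖)⁻¹ ^ 2 *
        (inner ℂ z w : ℂ).im := by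
  have hD : ((Real.cosh t : ℂ) + (Real.sinh t : ℂ) * (inner ℂ ξ z : ℂ)) ≠ 0 := by
    intro h
    have ha : ‖(inner ℂ ξ z : ℂ)‖ ≤ 1 := by
      have := norm_inner_le_norm (𝕜 := ℂ) ξ z
      rw [hξ, hz] at this; simpa using this
    have hs : |Real.sinh t| < Real.cosh t := by
      nlinarith [Real.cosh_sq t, Real.cosh_pos t, sq_abs (Real.sinh t), abs_nonneg (Real.sinh t)]
    have h2 : (Real.sinh t : ℂ) * (inner ℂ ξ z : ℂ) = -(Real.cosh t : ℂ) := by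
      linear_combination h
    have h3 : |Real.sinh t| * ‖(inner ℂ ξ z : ℂ)‖ = Real.cosh t := by
      rw [← Real.norm_eq_abs, ← Complex.norm_real, ← norm_mul, h2, norm_neg, Complex.norm_real, Real.norm_eq_abs,
        abs_of_pos (Real.cosh_pos t)]
    nlinarith [mul_le_of_le_one_right (abs_nonneg (Real.sinh t)) ha,
      norm_nonneg (inner ℂ ξ z : ℂ)]
  -- derivative
  set A : EuclideanSpace ℂ (Fin (m+1)) →L[ℝ] ℂ := (innerSL ℂ ξ).restrictScalars ℝ with hA
  have h0 : HasFDerivAt (fun y : EuclideanSpace ℂ (Fin (m+1)) => (inner ℂ ξ y : ℂ)) A z :=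
    A.hasFDerivAt
  have hden : HasFDerivAt
      (fun y : EuclideanSpace ℂ (Fin (m+1)) => (Real.cosh t : ℂ) + (Real.sinh t : ℂ) * (inner ℂ ξ y : ℂ))
      ((Real.sinh t : ℂ) • A) z := by
    simpa using (h0.const_mul (Real.sinh t : ℂ)).const_add (Real.cosh t : ℂ)
  have hinv := ((hasFDerivAt_inv hD).restrictScalars ℝ).comp z hden
  have hsub : HasFDerivAt (fun y : EuclideanSpace ℂ (Fin (m+1)) => y - (inner ℂ ξ y : ℂ) • ξ)
      (ContinuousLinearMap.id ℝ (EuclideanSpace ℂ (Fin (m+1))) - A.smulRight ξ) z :=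
    (hasFDerivAt_id z).sub (h0.smul_const ξ)
  have hnum : HasFDerivAt
      (fun y : EuclideanSpace ℂ (Fin (m+1)) => (Real.sinh t : ℂ) + (Real.cosh t : ℂ) * (inner ℂ ξ y : ℂ))
      ((Real.cosh t : ℂ) • A) z := by
    simpa using (h0.const_mul (Real.cosh t : ℂ)).const_add (Real.sinh t : ℂ)
  have htot := (hinv.smul hsub).add (((hnum.mul hinv).smul_const ξ))
  simp only [Function.comp_def, Pi.smul_def', Pi.mul_def, Pi.add_def] at htot
  have hPhi : PhiC t ξ = fun y : EuclideanSpace ℂ (Fin (m+1)) =>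
      ((Real.cosh t : ℂ) + (Real.sinh t : ℂ) * (inner ℂ ξ y : ℂ))⁻¹ • (y - (inner ℂ ξ y : ℂ) • ξ) +
        (((Real.sinh t : ℂ) + (Real.cosh t : ℂ) * (inner ℂ ξ y : ℂ)) *
          ((Real.cosh t : ℂ) + (Real.sinh t : ℂ) * (inner ℂ ξ y : ℂ))⁻¹) • ξ := by
    funext y; simp only [PhiC, hprod, div_eq_mul_inv]
  rw [← hPhi] at htot
  have hW := congrArg (fun (L : EuclideanSpace ℂ (Fin (m+1)) →L[ℝ] EuclideanSpace ℂ (Fin (m+1))) => L w) htot.fderiv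
  simp only [add_apply, smul_apply, comp_apply, coe_smul', Pi.smul_apply, smulRight_apply,
    coe_sub', Pi.sub_apply, ContinuousLinearMap.coe_id, id_eq, coe_restrictScalars',
    innerSL_apply_apply, one_apply, smul_eq_mul, one_mul, hA, ContinuousLinearMap.id_apply, toSpanSingleton_apply] at hW
  clear h0 hden hinv hsub hnum htot hPhi
  rw [hW]
  -- expand inner ℂ products
  have hzz : (inner ℂ z z : ℂ) = 1 := by
    rw [inner_self_eq_norm_sq_to_K, hz]; norm_num
  have hξξ : (inner ℂ ξ ξ : ℂ) = 1 := by
    rw [inner_self_eq_norm_sq_to_K, hξ]; norm_num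
  have hzξ : (inner ℂ z ξ : ℂ) = (starRingEnd ℂ) (inner ℂ ξ z : ℂ) := (inner_conj_symm z ξ).symm
  have hPhiz : PhiC t ξ z =
      ((Real.cosh t : ℂ) + (Real.sinh t : ℂ) * (inner ℂ ξ z : ℂ))⁻¹ • (z - (inner ℂ ξ z : ℂ) • ξ) +
        (((Real.sinh t : ℂ) + (Real.cosh t : ℂ) * (inner ℂ ξ z : ℂ)) *
          ((Real.cosh t : ℂ) + (Real.sinh t : ℂ) * (inner ℂ ξ z : ℂ))⁻¹) • ξ := by
    simp only [PhiC, hprod, div_eq_mul_inv]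
  rw [hPhiz]
  simp only [inner_add_left, inner_add_right, inner_smul_left, inner_smul_right,
    inner_sub_left, inner_sub_right, hzz, hξξ, hzξ, map_mul, map_add, map_inv₀, map_neg,
    map_pow, Complex.conj_conj, Complex.conj_ofReal]
  show _ = (‖(Real.cosh t : ℂ) + (Real.sinh t : ℂ) * (inner ℂ ξ z : ℂ)‖)⁻¹ ^ 2 * (inner ℂ z w : ℂ).im
  set C : ℂ := (Real.cosh t : ℂ) with hC
  set S : ℂ := (Real.sinh t : ℂ) with hS
  set a : ℂ := (inner ℂ ξ z : ℂ) with ha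
  set b : ℂ := (inner ℂ ξ w : ℂ) with hb
  set p : ℂ := (inner ℂ z w : ℂ) with hp
  set q : ℂ := (starRingEnd ℂ) a with hq
  have hDq : C + S * q ≠ 0 := by
    intro h
    apply hD
    have h2 := congrArg (starRingEnd ℂ) h
    simp only [hq, hC, hS, map_add, map_mul, map_zero, Complex.conj_conj,
      Complex.conj_ofReal] at h2
    exact h2
  have hcs : C ^ 2 - S ^ 2 = 1 := by
    rw [hC, hS, Complex.ofReal_cosh, Complex.ofReal_sinh]
    exact Complex.cosh_sq_sub_sinh_sq _
  have hr : (C + S * a) * (C + S * q) = ((Complex.normSq (C + S * a) : ℝ) : ℂ) := by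
    rw [← Complex.mul_conj]
    congr 1
    rw [hq, hC, hS]
    simp only [map_add, map_mul, Complex.conj_ofReal]
  have key : ((C + S * a)⁻¹ *
          ((C + S * q)⁻¹ * (p - q * b) +
              (S + C * q) * (C + S * q)⁻¹ * b -
            b * ((C + S * q)⁻¹ * (q - q * 1) + (S + C * q) * (C + S * q)⁻¹ * 1)) +
        S * b * -((C + S * a) ^ 2)⁻¹ *
          ((C + S * q)⁻¹ * (1 - q * a) + (S + C * q) * (C + S * q)⁻¹ * a -
            a * ((C + S * q)⁻¹ * (q - q * 1) + (S + C * q) * (C + S * q)⁻¹ * 1)) +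
      ((S + C * a) * (S * b * -((C + S * a) ^ 2)⁻¹) + (C + S * a)⁻¹ * (C * b)) *
        ((C + S * q)⁻¹ * (q - q * 1) + (S + C * q) * (C + S * q)⁻¹ * 1))
      = ((C + S * a) * (C + S * q))⁻¹ * p := by
    have h1 : (C + S * a) * (C + S * a)⁻¹ = 1 := mul_inv_cancel₀ hD
    rw [show (((C + S * a) : ℂ)^2)⁻¹ = ((C + S * a)⁻¹)^2 from (inv_pow _ 2).symm,
      show (((C + S * a) * (C + S * q) : ℂ))⁻¹ = (C + S * a)⁻¹ * (C + S * q)⁻¹ from mul_inv_rev _ _ |>.trans (mul_comm _ _)]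
    linear_combination ((C + S * a)⁻¹ * b * (C + S * q)⁻¹ * q
        - (C + S * a)⁻¹ * b * (C + S * q)⁻¹ * C * (S + C * q)) * h1
      + (((C + S * a)⁻¹) ^ 2 * b * (C + S * q)⁻¹ * (S + C * q)) * hcs
  rw [key, hr, ← Complex.ofReal_inv]
  rw [inv_pow, Complex.sq_norm]
  simp [Complex.mul_im]
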